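/- Let n ≥ 1, let A be an n×c approval matrix and B an n×c beta(k) matrix such that for all voters i and candidates j, A i j = 1 if and only if B i j ≠ 0, and suppose 1 ≤ k < 1 + 1/n. If there is exactly one approval winner w (i.e., w is the unique candidate whose column sum in A is maximal), then a candidate is a beta(k) winner if and only if it equals w; that is, the set of beta(k) winners equals {w}. -/

import Mathlib

/-- The score of candidate `j` under vote matrix `Z`: the sum of column `j`. -/
def score {n c : ℕ} (Z : Fin n → Fin c → ℝ) (j : Fin c) : ℝ := ∑ i, Z i j

/-- Candidate `j` is a winner for `Z` if its score is maximal among all candidates. -/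
def IsWinner {n c : ℕ} (Z : Fin n → Fin c → ℝ) (j : Fin c) : Prop :=
  ∀ j', score Z j' ≤ score Z j

/-- A plurality matrix: all entries in {0,1}, exactly one `1` in each row. -/
def IsPluralityMatrix {n c : ℕ} (P : Fin n → Fin c → ℝ) : Prop :=
  (∀ i j, P i j = 0 ∨ P i j = 1) ∧ ∀ i, ∃! j, P i j = 1

/-- An approval matrix: all entries in {0,1}, at least one `1` in each row. -/
def IsApprovalMatrix {n c : ℕ} (A : Fin n → Fin c → ℝ) : Prop :=
  (∀ i j, A i j = 0 ∨ A i j = 1) ∧ ∀ i, ∃ j, A i j = 1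

/-- A beta(k) matrix: in each row, one designated entry equals `k`,
all other entries of that row lie in {0,1}. -/
def IsBetaMatrix {n c : ℕ} (k : ℝ) (B : Fin n → Fin c → ℝ) : Prop :=
  ∀ i, ∃ j, B i j = k ∧ ∀ j' ≠ j, B i j' = 0 ∨ B i j' = 1

/-- if `A i j = 1 ↔ B i j ≠ 0`, `1 ≤ k < 1 + 1/n`, and there is a unique
approval winner `w`, then the beta(k) winners are exactly `{w}`. -/
theorem stmt_11 {n c : ℕ} (hn : 1 ≤ n) (k : ℝ) (hk : 1 ≤ k) (hk' : k < 1 + 1 / n)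
    (A B : Fin n → Fin c → ℝ)
    (hA : IsApprovalMatrix A) (hB : IsBetaMatrix k B)
    (hAB : ∀ i j, A i j = 1 ↔ B i j ≠ 0)
    (w : Fin c) (hw : IsWinner A w) (huniq : ∀ j, IsWinner A j → j = w) :
    ∀ j : Fin c, IsWinner B j ↔ j = w := by
  have hbound : ∀ i j, A i j ≤ B i j ∧ B i j ≤ A i j + (k - 1) := by
    intro i j
    obtain ⟨d, hd, hoth⟩ := hB i
    by_cases hjd : j = d
    · subst hjd
      have hA1 : A i j = 1 := (hAB i j).mpr (by rw [hd]; intro h; linarith)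
      constructor <;> rw [hd, hA1] <;> linarith
    · rcases hoth j hjd with h0 | h1
      · have hA0 : A i j = 0 := by
          rcases hA.1 i j with h | h
          · exact h
          · exact absurd h0 ((hAB i j).mp h)
        constructor <;> rw [h0, hA0] <;> linarith
      · have hA1 : A i j = 1 := (hAB i j).mpr (by rw [h1]; norm_num)
        constructor <;> rw [h1, hA1] <;> linarith
  have hscore1 : ∀ j, score A j ≤ score B j := fun j =>
    Finset.sum_le_sum fun i _ => (hbound i j).1
  have hscore2 : ∀ j, score B j ≤ score A j + n * (k - 1) := by
    intro j
    have h := Finset.sum_le_sum (fun i (_ : i ∈ Finset.univ) => (hbound i j).2)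
    simpa [score, Finset.sum_add_distrib, Finset.card_univ, mul_sub, mul_one] using h
  have hint : ∀ j, ∃ m : ℕ, score A j = m := by
    intro j
    refine ⟨(Finset.univ.filter fun i => A i j = 1).card, ?_⟩
    rw [score, Finset.card_filter]
    push_cast
    refine Finset.sum_congr rfl fun i _ => ?_
    rcases hA.1 i j with h | h <;> simp [h]
  have hn1 : (1:ℝ) ≤ n := by exact_mod_cast hn
  have hnk : (n:ℝ) * (k - 1) < 1 := by
    have hn0 : (0:ℝ) < n := by linarith
    have h1 : k - 1 < 1 / n := by linarith
    calc (n:ℝ) * (k-1) < n * (1/n) := mul_lt_mul_of_pos_left h1 hn0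
      _ = 1 := by field_simp
  have hstrict : ∀ j, j ≠ w → score B j < score B w := by
    intro j hjw
    have hjl : score A j < score A w := by
      by_contra h
      push_neg at h
      exact hjw (huniq j fun j' => le_trans (hw j') h)
    obtain ⟨a, ha⟩ := hint j
    obtain ⟨b, hb⟩ := hint w
    have hab : a < b := by rw [ha, hb] at hjl; exact_mod_cast hjl
    have h1 : score A j + 1 ≤ score A w := by
      rw [ha, hb]; exact_mod_cast hab
    calc score B j ≤ score A j + n*(k-1) := hscore2 j
      _ < score A j + 1 := by linarith
      _ ≤ score A w := h1
      _ ≤ score B w := hscore1 w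
  intro j
  constructor
  · intro hwin
    by_contra hne
    exact absurd (hwin w) (not_le.mpr (hstrict j hne))
  · rintro rfl
    intro j'
    by_cases h : j' = j
    · subst h; exact le_refl _
    · exact le_of_lt (hstrict j' h)
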